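/- arXiv:2104.04500 — 2 statements merged into one kernel-verified Lean document; each statement's English description precedes it below -/
import Mathlib

section
/- Ergosphere/non-trapping condition equivalence: let Λ > 0, m > 0, a ∈ ℝ be such that μ(r) := (r² + a²)(1 − Λr²/3) − 2mr has four distinct real roots r_0 < r_C < r_e < r_c. Then (1 − Λa²/3)³ > 9m²Λ holds if and only if there exists r ∈ (r_e, r_c) with μ(r) > a². -/
open Set

set_option maxHeartbeats 1000000 in
/-- **Ergosphere/non-trapping condition equivalence** on subextremal Kerr–de Sitter:
`(1 − Λa²/3)³ > 9m²Λ` holds iff there exists `r ∈ (r_e, r_c)` with `μ(r) > a²`. -/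
theorem kds_ergosphere_condition_iff (a m Λ r0 rC re rc : ℝ) (hm : 0 < m) (hΛ : 0 < Λ)
    (h01 : r0 < rC) (h12 : rC < re) (h23 : re < rc)
    (μ : ℝ → ℝ) (hμ : ∀ r, μ r = (r ^ 2 + a ^ 2) * (1 - Λ * r ^ 2 / 3) - 2 * m * r)
    (hroot0 : μ r0 = 0) (hrootC : μ rC = 0) (hroote : μ re = 0) (hrootc : μ rc = 0) :
    (1 - Λ * a ^ 2 / 3) ^ 3 > 9 * m ^ 2 * Λ ↔ ∃ r ∈ Ioo re rc, a ^ 2 < μ r := by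
  have A0 : (r0 ^ 2 + a ^ 2) * (1 - Λ * r0 ^ 2 / 3) - 2 * m * r0 = 0 := by rw [← hμ]; exact hroot0
  have AC : (rC ^ 2 + a ^ 2) * (1 - Λ * rC ^ 2 / 3) - 2 * m * rC = 0 := by rw [← hμ]; exact hrootC
  have Ae : (re ^ 2 + a ^ 2) * (1 - Λ * re ^ 2 / 3) - 2 * m * re = 0 := by rw [← hμ]; exact hroote
  have Ac : (rc ^ 2 + a ^ 2) * (1 - Λ * rc ^ 2 / 3) - 2 * m * rc = 0 := by rw [← hμ]; exact hrootc
  have dC0 : rC - r0 ≠ 0 := sub_ne_zero.mpr h01.ne'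
  have de0 : re - r0 ≠ 0 := sub_ne_zero.mpr (h01.trans h12).ne'
  have dc0 : rc - r0 ≠ 0 := sub_ne_zero.mpr ((h01.trans h12).trans h23).ne'
  have dcC : rc - rC ≠ 0 := sub_ne_zero.mpr (h12.trans h23).ne'
  have dce : rc - re ≠ 0 := sub_ne_zero.mpr h23.ne'
  -- first divided differences
  have hQC : -(Λ/3)*(rC^3+rC^2*r0+rC*r0^2+r0^3) + (1-Λ*a^2/3)*(rC+r0) - 2*m = 0 := by
    have h : (rC - r0) * (-(Λ/3)*(rC^3+rC^2*r0+rC*r0^2+r0^3) + (1-Λ*a^2/3)*(rC+r0) - 2*m) = 0 := by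
      linear_combination AC - A0
    exact (mul_eq_zero.mp h).resolve_left dC0
  have hQe : -(Λ/3)*(re^3+re^2*r0+re*r0^2+r0^3) + (1-Λ*a^2/3)*(re+r0) - 2*m = 0 := by
    have h : (re - r0) * (-(Λ/3)*(re^3+re^2*r0+re*r0^2+r0^3) + (1-Λ*a^2/3)*(re+r0) - 2*m) = 0 := by
      linear_combination Ae - A0
    exact (mul_eq_zero.mp h).resolve_left de0
  have hQc : -(Λ/3)*(rc^3+rc^2*r0+rc*r0^2+r0^3) + (1-Λ*a^2/3)*(rc+r0) - 2*m = 0 := by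
    have h : (rc - r0) * (-(Λ/3)*(rc^3+rc^2*r0+rc*r0^2+r0^3) + (1-Λ*a^2/3)*(rc+r0) - 2*m) = 0 := by
      linear_combination Ac - A0
    exact (mul_eq_zero.mp h).resolve_left dc0
  -- second divided differences
  have hRe : -(Λ/3)*(re^2+re*rC+rC^2+r0*re+r0*rC+r0^2) + (1-Λ*a^2/3) = 0 := by
    have h : (re - rC) * (-(Λ/3)*(re^2+re*rC+rC^2+r0*re+r0*rC+r0^2) + (1-Λ*a^2/3)) = 0 := by
      linear_combination hQe - hQC
    exact (mul_eq_zero.mp h).resolve_left (sub_ne_zero.mpr h12.ne')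
  have hRc : -(Λ/3)*(rc^2+rc*rC+rC^2+r0*rc+r0*rC+r0^2) + (1-Λ*a^2/3) = 0 := by
    have h : (rc - rC) * (-(Λ/3)*(rc^2+rc*rC+rC^2+r0*rc+r0*rC+r0^2) + (1-Λ*a^2/3)) = 0 := by
      linear_combination hQc - hQC
    exact (mul_eq_zero.mp h).resolve_left dcC
  -- sum of roots vanishes
  have hsum : r0 + rC + re + rc = 0 := by
    have h : ((rc - re) * (Λ/3)) * (r0 + rC + re + rc) = 0 := by
      linear_combination hRe - hRc
    have hne : (rc - re) * (Λ/3) ≠ 0 := mul_ne_zero dce (by positivity)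
    exact (mul_eq_zero.mp h).resolve_left hne
  -- the factorization of μ
  have hfact : ∀ r, μ r = -(Λ/3)*((r-r0)*(r-rC)*(r-re)*(r-rc)) := by
    intro r
    rw [hμ r]
    linear_combination A0 + (r - r0) * hQC + (r-r0)*(r-rC) * hRe
      + (-(Λ/3)*(r-r0)*(r-rC)*(r-re)) * hsum
  have hr0 : r0 = -(rC + re + rc) := by linarith
  have hr0neg : r0 < 0 := by linarith
  have ha2 : a ^ 2 = -(Λ/3) * (r0*rC*re*rc) := by
    have h0 := hfact 0
    rw [hμ 0] at h0
    linear_combination h0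
  -- rC is nonnegative
  have hrC : 0 ≤ rC := by
    by_contra hneg
    push_neg at hneg
    rcases lt_trichotomy re 0 with hre | hre | hre
    · -- all of r0, rC, re negative: impossible
      have hpe : 0 < re^2 + a^2 := by
        linarith only [mul_pos (neg_pos.mpr hre) (neg_pos.mpr hre), sq_nonneg a]
      have ee : 3 < Λ * re^2 := by
        nlinarith only [Ae, hpe, mul_pos hm (neg_pos.mpr hre)]
      have hrcpos : 0 < rc := by linarith
      have h2 : 0 < (rc+re)*(rc-re) := mul_pos (by linarith) (by linarith)
      have hrc2 : 3 < Λ * rc^2 := by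
        linarith only [ee, mul_pos hΛ h2]
      have hpc : 0 < rc^2 + a^2 := by
        linarith only [mul_pos hrcpos hrcpos, sq_nonneg a]
      nlinarith only [Ac, hrc2, hpc, mul_pos hm hrcpos]
    · -- re = 0 : then 2m = Λ/3 · r0 rC (r0+rC) < 0, impossible
      subst hre
      have key : 2*m = Λ/3 * (r0*rC*(r0+rC)) := by
        linear_combination (-1) * hQC + (rC+r0) * hRe
      have hposq : 0 < (-r0)*(-rC)*(-(r0+rC)) :=
        mul_pos (mul_pos (neg_pos.mpr hr0neg) (neg_pos.mpr hneg)) (by linarith)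
      linarith only [key, hm, mul_pos hΛ hposq]
    · -- rC < 0 < re : then μ(0) < 0 but μ(0) = a² ≥ 0
      have p1 : 0 < (-r0)*(-rC) := mul_pos (neg_pos.mpr hr0neg) (neg_pos.mpr hneg)
      have p2 : 0 < re*rc := mul_pos hre (hre.trans h23)
      have hX : 0 < r0*rC*re*rc := by linarith only [mul_pos p1 p2]
      linarith only [ha2, mul_pos hΛ hX, sq_nonneg a]
  have hre_pos : 0 < re := lt_of_le_of_lt hrC h12
  have hrc_pos : 0 < rc := hre_pos.trans h23
  constructor
  · -- forward direction
    intro H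
    have hαpos : 0 < 1 - Λ * a ^ 2 / 3 := by
      by_contra hc
      push_neg at hc
      linarith only [H, mul_pos (mul_pos hm hm) hΛ,
        mul_nonneg (mul_nonneg (neg_nonneg.mpr hc) (neg_nonneg.mpr hc)) (neg_nonneg.mpr hc)]
    have hsq : 0 < (1 - Λ * a ^ 2 / 3)/Λ := div_pos hαpos hΛ
    set s := Real.sqrt ((1 - Λ * a ^ 2 / 3)/Λ) with hs
    have hspos : 0 < s := Real.sqrt_pos.mpr hsq
    have hs2 : s^2 = (1 - Λ * a ^ 2 / 3)/Λ := Real.sq_sqrt hsq.le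
    have hαs : Λ * s^2 = 1 - Λ * a ^ 2 / 3 := by
      rw [hs2]; field_simp
    have h3m : 3*m < (1 - Λ * a ^ 2 / 3)*s := by
      by_contra hc
      push_neg at hc
      have h1 : ((1 - Λ * a ^ 2 / 3)*s)^2 ≤ (3*m)^2 := by
        nlinarith only [hc, mul_pos hαpos hspos, hm]
      have h2 : (1 - Λ * a ^ 2 / 3)^3 = Λ * ((1 - Λ * a ^ 2 / 3)*s)^2 := by
        linear_combination (-(1 - Λ * a ^ 2 / 3)^2) * hαs
      linarith only [h2, H, mul_le_mul_of_nonneg_left h1 hΛ.le]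
    have hz : s^2*(Λ*s^2 - (1 - Λ * a ^ 2 / 3)) = 0 := by rw [hαs]; ring
    have hμs : a ^ 2 < μ s := by
      rw [hμ s]
      have hf : 0 < 2/3*((1 - Λ * a ^ 2 / 3)*s) - 2*m := by linarith
      linarith only [mul_pos hspos hf, hz]
    -- location: rC < s
    have hsC : rC < s := by
      by_contra hc
      push_neg at hc  -- s ≤ rC
      have hr0s : r0*s = -((rC+re+rc)*s) := by rw [hr0]; ring
      have hA0 : 0 ≤ (s - r0) * (rC - s) := mul_nonneg (by linarith) (by linarith)
      have hA : (s - r0)*(rC - s) ≤ (-r0)*rC := by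
        have hd : 0 < s*(re+rc+s) := mul_pos hspos (by linarith)
        linarith only [hd, hr0s]
      have hB0 : 0 ≤ (re - s)*(rc - s) := mul_nonneg (by linarith) (by linarith)
      have hB : (re - s)*(rc - s) ≤ re * rc := by
        have hd : 0 < s*(re+rc-s) := mul_pos hspos (by linarith)
        linarith only [hd]
      have hprod : ((s - r0)*(rC - s))*((re - s)*(rc - s)) ≤ ((-r0)*rC)*(re*rc) :=
        mul_le_mul hA hB hB0 (mul_nonneg (by linarith) hrC)
      have hL : (0:ℝ) ≤ Λ/3 := by positivity
      linarith only [hfact s, ha2, hμs, mul_le_mul_of_nonneg_left hprod hL]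
    have hse : re < s := by
      by_contra hc
      push_neg at hc  -- s ≤ re
      have hp : 0 ≤ (s-r0)*(s-rC)*(s-re)*(s-rc) := by
        have h1 : 0 ≤ (re-s)*(rc-s) := mul_nonneg (by linarith) (by linarith)
        have h2 : 0 ≤ (s-r0)*(s-rC) := (mul_pos (by linarith) (by linarith)).le
        calc (0:ℝ) ≤ ((s-r0)*(s-rC))*((re-s)*(rc-s)) := mul_nonneg h2 h1
        _ = ((s-r0)*(s-rC))*((s-re)*(s-rc)) := by ring
        _ = (s-r0)*(s-rC)*(s-re)*(s-rc) := by ring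
      have hL : (0:ℝ) ≤ Λ/3 := by positivity
      linarith only [hfact s, hμs, sq_nonneg a, mul_nonneg hL hp]
    have hsc : s < rc := by
      by_contra hc
      push_neg at hc  -- rc ≤ s
      have hp : 0 ≤ (s-r0)*(s-rC)*(s-re)*(s-rc) := by
        have h1 : 0 ≤ (s-re)*(s-rc) := mul_nonneg (by linarith) (by linarith)
        have h2 : 0 ≤ (s-r0)*(s-rC) := (mul_pos (by linarith) (by linarith)).le
        calc (0:ℝ) ≤ ((s-r0)*(s-rC))*((s-re)*(s-rc)) := mul_nonneg h2 h1
        _ = (s-r0)*(s-rC)*(s-re)*(s-rc) := by ring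
      have hL : (0:ℝ) ≤ Λ/3 := by positivity
      linarith only [hfact s, hμs, sq_nonneg a, mul_nonneg hL hp]
    exact ⟨s, ⟨hse, hsc⟩, hμs⟩
  · -- reverse direction
    rintro ⟨r, ⟨hr1, hr2⟩, hr3⟩
    have hrpos : 0 < r := hre_pos.trans hr1
    rw [hμ r] at hr3
    have h0 : 0 < r * ((1 - Λ * a ^ 2 / 3)*r - Λ*r^3/3 - 2*m) := by
      linarith only [hr3]
    have hX : 0 < (1 - Λ * a ^ 2 / 3)*r - Λ*r^3/3 - 2*m := by
      by_contra hc
      push_neg at hc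
      linarith only [h0, mul_nonneg hrpos.le (neg_nonneg.mpr hc)]
    have hαpos : 0 < 1 - Λ * a ^ 2 / 3 := by
      by_contra hc
      push_neg at hc
      linarith only [hX, hm, mul_pos (mul_pos hΛ hrpos) (mul_pos hrpos hrpos),
        mul_nonpos_of_nonpos_of_nonneg hc hrpos.le]
    have hsq : 0 < (1 - Λ * a ^ 2 / 3)/Λ := div_pos hαpos hΛ
    set s := Real.sqrt ((1 - Λ * a ^ 2 / 3)/Λ) with hs
    have hspos : 0 < s := Real.sqrt_pos.mpr hsq
    have hs2 : s^2 = (1 - Λ * a ^ 2 / 3)/Λ := Real.sq_sqrt hsq.le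
    have hαs : Λ * s^2 = 1 - Λ * a ^ 2 / 3 := by
      rw [hs2]; field_simp
    have hαss : Λ * s^3 = (1 - Λ * a ^ 2 / 3) * s := by linear_combination s * hαs
    have hαsr : Λ * s^2 * r = (1 - Λ * a ^ 2 / 3) * r := by linear_combination r * hαs
    have key : (1 - Λ * a ^ 2 / 3)*r - Λ*r^3/3 ≤ 2/3*((1 - Λ * a ^ 2 / 3)*s) := by
      have h1 : 0 ≤ Λ*(r-s)^2*(r+2*s) :=
        mul_nonneg (mul_nonneg hΛ.le (sq_nonneg (r-s))) (by linarith)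
      linarith only [h1, hαss, hαsr]
    have h3m : 3*m < (1 - Λ * a ^ 2 / 3)*s := by linarith
    have h1 : (3*m)^2 < ((1 - Λ * a ^ 2 / 3)*s)^2 := by
      nlinarith only [h3m, hm, mul_pos hαpos hspos]
    have h2 : (1 - Λ * a ^ 2 / 3)^3 = Λ * ((1 - Λ * a ^ 2 / 3)*s)^2 := by
      linear_combination (-(1 - Λ * a ^ 2 / 3)^2) * hαs
    linarith only [h2, mul_lt_mul_of_pos_left h1 hΛ]
end

section
/- Dual metric of Kerr–de Sitter in Boyer–Lindquist coordinates: for all (r,θ) with r > r_C, μ(r) ≠ 0 and sin θ ≠ 0, the matrix G(r,θ) defined below satisfies G(r,θ) · g_BL(r,θ) = Id₄, where G is the symmetric 4×4 matrix indexed by (t,r,φ,θ) with ρ²·G_{rr} = μ(r), ρ²·G_{θθ} = c(θ), ρ²·G_{tt} = b²a²sin²θ/c(θ) − b²(r²+a²)²/μ(r), ρ²·G_{tφ} = b²a/c(θ) − b²a(r²+a²)/μ(r), ρ²·G_{φφ} = b²/(c(θ)sin²θ) − b²a²/μ(r), and all other entries zero. -/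
open Set Matrix

noncomputable section

namespace KdSDual

/-- The horizon quartic `μ(r) = (r² + a²)(1 − Λr²/3) − 2mr`. -/
def mu (a m Λ r : ℝ) : ℝ := (r ^ 2 + a ^ 2) * (1 - Λ * r ^ 2 / 3) - 2 * m * r

/-- `b = 1 + Λa²/3`. -/
def bc (a Λ : ℝ) : ℝ := 1 + Λ * a ^ 2 / 3

/-- `c(θ) = 1 + (Λa²/3)cos²θ`. -/
def cth (a Λ θ : ℝ) : ℝ := 1 + Λ * a ^ 2 / 3 * Real.cos θ ^ 2

/-- `ρ²(r,θ) = r² + a²cos²θ`. -/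
def rhosq (a r θ : ℝ) : ℝ := r ^ 2 + a ^ 2 * Real.cos θ ^ 2

/-- The Kerr–de Sitter metric in Boyer–Lindquist coordinates `(t, r, φ, θ)`. -/
def gBL (a m Λ r θ : ℝ) : Matrix (Fin 4) (Fin 4) ℝ :=
  !![(a ^ 2 * cth a Λ θ * Real.sin θ ^ 2 - mu a m Λ r) / (bc a Λ ^ 2 * rhosq a r θ), 0,
       a * Real.sin θ ^ 2 * (mu a m Λ r - cth a Λ θ * (r ^ 2 + a ^ 2)) /
         (bc a Λ ^ 2 * rhosq a r θ), 0;
     0, rhosq a r θ / mu a m Λ r, 0, 0;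
     a * Real.sin θ ^ 2 * (mu a m Λ r - cth a Λ θ * (r ^ 2 + a ^ 2)) /
       (bc a Λ ^ 2 * rhosq a r θ), 0,
       Real.sin θ ^ 2 * (cth a Λ θ * (r ^ 2 + a ^ 2) ^ 2 -
         mu a m Λ r * a ^ 2 * Real.sin θ ^ 2) / (bc a Λ ^ 2 * rhosq a r θ), 0;
     0, 0, 0, rhosq a r θ / cth a Λ θ]

/-- The dual (inverse) Kerr–de Sitter metric in Boyer–Lindquist coordinates:
`ρ²G_rr = μ`, `ρ²G_θθ = c`, `ρ²G_tt = b²a²sin²θ/c − b²(r²+a²)²/μ`,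
`ρ²G_tφ = b²a/c − b²a(r²+a²)/μ`, `ρ²G_φφ = b²/(c sin²θ) − b²a²/μ`. -/
def Gdual (a m Λ r θ : ℝ) : Matrix (Fin 4) (Fin 4) ℝ :=
  !![(bc a Λ ^ 2 * a ^ 2 * Real.sin θ ^ 2 / cth a Λ θ -
        bc a Λ ^ 2 * (r ^ 2 + a ^ 2) ^ 2 / mu a m Λ r) / rhosq a r θ, 0,
       (bc a Λ ^ 2 * a / cth a Λ θ -
         bc a Λ ^ 2 * a * (r ^ 2 + a ^ 2) / mu a m Λ r) / rhosq a r θ, 0;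
     0, mu a m Λ r / rhosq a r θ, 0, 0;
     (bc a Λ ^ 2 * a / cth a Λ θ -
       bc a Λ ^ 2 * a * (r ^ 2 + a ^ 2) / mu a m Λ r) / rhosq a r θ, 0,
       (bc a Λ ^ 2 / (cth a Λ θ * Real.sin θ ^ 2) -
         bc a Λ ^ 2 * a ^ 2 / mu a m Λ r) / rhosq a r θ, 0;
     0, 0, 0, cth a Λ θ / rhosq a r θ]

end KdSDual

open KdSDual

private theorem KdSDual.rC_nonneg (a m Λ r0 rC re rc : ℝ) (hm : 0 < m) (hΛ : 0 < Λ)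
    (h01 : r0 < rC) (h12 : rC < re) (h23 : re < rc)
    (hroot0 : mu a m Λ r0 = 0) (hrootC : mu a m Λ rC = 0)
    (hroote : mu a m Λ re = 0) (hrootc : mu a m Λ rc = 0) : 0 ≤ rC := by
  by_contra hneg
  push_neg at hneg
  have hr0neg : r0 < 0 := lt_trans h01 hneg
  have key : ∀ x y : ℝ, x ≠ y → mu a m Λ x = 0 → mu a m Λ y = 0 →
      -(Λ/3) * (x^3 + x^2*y + x*y^2 + y^3) + (1 - Λ*a^2/3) * (x + y) - 2*m = 0 := by
    intro x y hxy hx hy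
    have hne : x - y ≠ 0 := sub_ne_zero_of_ne hxy
    have h : (x - y) * (-(Λ/3) * (x^3 + x^2*y + x*y^2 + y^3) + (1 - Λ*a^2/3) * (x + y) - 2*m) = 0 := by
      unfold mu at hx hy; linear_combination hx - hy
    exact (mul_eq_zero.mp h).resolve_left hne
  have key2 : ∀ x y z : ℝ, x ≠ y → x ≠ z → y ≠ z →
      mu a m Λ x = 0 → mu a m Λ y = 0 → mu a m Λ z = 0 →
      -(Λ/3) * (x^2 + y^2 + z^2 + x*y + x*z + y*z) + (1 - Λ*a^2/3) = 0 := by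
    intro x y z hxy hxz hyz hx hy hz
    have h1 := key x y hxy hx hy
    have h2 := key x z hxz hx hz
    have hne : y - z ≠ 0 := sub_ne_zero_of_ne hyz
    have h : (y - z) * (-(Λ/3) * (x^2 + y^2 + z^2 + x*y + x*z + y*z) + (1 - Λ*a^2/3)) = 0 := by
      linear_combination h1 - h2
    exact (mul_eq_zero.mp h).resolve_left hne
  have hsum : r0 + rC + re + rc = 0 := by
    have h1 := key2 r0 rC re (ne_of_lt h01) (ne_of_lt (h01.trans h12)) (ne_of_lt h12)
      hroot0 hrootC hroote
    have h2 := key2 r0 rC rc (ne_of_lt h01) (ne_of_lt (h01.trans (h12.trans h23)))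
      (ne_of_lt (h12.trans h23)) hroot0 hrootC hrootc
    have hne : re - rc ≠ 0 := sub_ne_zero_of_ne (ne_of_lt h23)
    have h : (re - rc) * (-(Λ/3) * (r0 + rC + re + rc)) = 0 := by
      linear_combination h1 - h2
    have := (mul_eq_zero.mp h).resolve_left hne
    have hΛne : -(Λ/3) ≠ 0 := neg_ne_zero.mpr (by positivity)
    exact (mul_eq_zero.mp this).resolve_left hΛne
  have hC2 : 3 < Λ * rC ^ 2 := by
    have h := hrootC
    unfold mu at h
    nlinarith [sq_nonneg a, sq_nonneg rC, mul_pos hm (show 0 < -rC by linarith), sq_nonneg (rC*a)]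
  have h02 : 3 < Λ * r0 ^ 2 := by
    have h := hroot0
    unfold mu at h
    nlinarith [sq_nonneg a, sq_nonneg r0, mul_pos hm (show 0 < -r0 by linarith), sq_nonneg (r0*a)]
  have hrcpos : 0 < rc := by nlinarith
  have hc2 : 3 < Λ * rc ^ 2 := by
    have hxy : 3 < Λ * (r0 * rC) := by
      nlinarith [mul_pos (show 0 < -r0 by linarith) (show 0 < -rC by linarith),
        mul_pos hΛ (mul_pos (show 0 < -r0 by linarith) (show 0 < -rC by linarith))]
    nlinarith [sq_nonneg (r0 - rC), sq_nonneg (r0 + rC + 2*rc)]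
  have := hrootc
  unfold mu at this
  nlinarith [mul_pos hm hrcpos, sq_nonneg a, mul_pos hrcpos hrcpos,
    mul_pos (mul_pos hΛ hrcpos) hrcpos]

private theorem KdSDual.inv_of_ne (a m Λ r θ : ℝ) (hμ : mu a m Λ r ≠ 0) (hs : Real.sin θ ≠ 0)
    (hb : bc a Λ ≠ 0) (hc : cth a Λ θ ≠ 0) (hρ : rhosq a r θ ≠ 0) :
    Gdual a m Λ r θ * gBL a m Λ r θ = 1 := by
  have hcos2 : Real.cos θ ^ 2 = 1 - Real.sin θ ^ 2 := by
    have := Real.sin_sq_add_cos_sq θ; linarith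
  have hρ2 : rhosq a r θ = r ^ 2 + a ^ 2 - a ^ 2 * Real.sin θ ^ 2 := by
    rw [rhosq, hcos2]; ring
  have hρ' : r ^ 2 + a ^ 2 - a ^ 2 * Real.sin θ ^ 2 ≠ 0 := hρ2 ▸ hρ
  ext i j
  fin_cases i <;> fin_cases j <;>
    simp [Gdual, gBL, Matrix.mul_apply, Fin.sum_univ_four, Matrix.one_apply,
      Matrix.vecHead, Matrix.vecTail] <;>
    (try (rw [hρ2]; field_simp; ring)) <;> (try field_simp)



/-- **Dual metric of Kerr–de Sitter in Boyer–Lindquist coordinates**: wherever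
`r > r_C`, `μ(r) ≠ 0` and `sin θ ≠ 0`, the matrix `G(r,θ)` is the inverse of
`g_BL(r,θ)`, i.e. `G(r,θ) ⬝ g_BL(r,θ) = 1`. -/
theorem kds_dual_metric (a m Λ r0 rC re rc : ℝ) (hm : 0 < m) (hΛ : 0 < Λ)
    (h01 : r0 < rC) (h12 : rC < re) (h23 : re < rc)
    (hroot0 : mu a m Λ r0 = 0) (hrootC : mu a m Λ rC = 0)
    (hroote : mu a m Λ re = 0) (hrootc : mu a m Λ rc = 0) :
    ∀ r θ : ℝ, rC < r → mu a m Λ r ≠ 0 → Real.sin θ ≠ 0 →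
      Gdual a m Λ r θ * gBL a m Λ r θ = 1 := by
  intro r θ hr hμ hs
  have hrC := KdSDual.rC_nonneg a m Λ r0 rC re rc hm hΛ h01 h12 h23 hroot0 hrootC hroote hrootc
  have hrpos : 0 < r := lt_of_le_of_lt hrC hr
  have hb : bc a Λ ≠ 0 := by
    have : 0 < bc a Λ := by
      unfold bc
      nlinarith [mul_nonneg hΛ.le (sq_nonneg a)]
    exact this.ne'
  have hc : cth a Λ θ ≠ 0 := by
    have : 0 < cth a Λ θ := by
      unfold cth
      nlinarith [mul_nonneg (mul_nonneg hΛ.le (sq_nonneg a)) (sq_nonneg (Real.cos θ))]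
    exact this.ne'
  have hρ : rhosq a r θ ≠ 0 := by
    have : 0 < rhosq a r θ := by
      unfold rhosq
      nlinarith [mul_nonneg (sq_nonneg a) (sq_nonneg (Real.cos θ))]
    exact this.ne'
  exact KdSDual.inv_of_ne a m Λ r θ hμ hs hb hc hρ
end
end
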